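/- arXiv:2604.23883 — 3 statements merged into one kernel-verified Lean document; each statement's English description precedes it below -/
import Mathlib

section
/- Let μ be a Borel probability measure on [0,1] with no atom of mass greater than 1/2. Define φ : [0,1) → [0,1) by φ(y) = y + 1/2 mod 1, and let Q^μ be the quantile function of μ. Then the set of z ∈ [0,1) with Q^μ(z) = Q^μ(φ(z)) has Lebesgue measure zero. -/
open MeasureTheory Set

/-- The quantile function of a Borel probability measure `μ` on `[0,1]`:
`Q^μ(p) = inf {t ∈ [0,1] : μ([0,t]) ≥ p}`. -/
noncomputable def quantile (μ : Measure ℝ) (p : ℝ) : ℝ :=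
  sInf {t ∈ Icc (0:ℝ) 1 | ENNReal.ofReal p ≤ μ (Icc 0 t)}

/-- The half-rotation of the circle `[0,1)`: `φ(y) = y + 1/2 mod 1`. -/
noncomputable def halfRot (y : ℝ) : ℝ := Int.fract (y + 1/2)

open Filter Topology

lemma quantileSet_nonempty (μ : Measure ℝ) [IsProbabilityMeasure μ]
    (hsupp : μ (Icc (0:ℝ) 1) = 1) {p : ℝ} (hp : p ≤ 1) :
    (1:ℝ) ∈ {t ∈ Icc (0:ℝ) 1 | ENNReal.ofReal p ≤ μ (Icc 0 t)} :=
  ⟨⟨zero_le_one, le_rfl⟩, by rw [hsupp]; exact ENNReal.ofReal_le_one.2 hp⟩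

lemma quantile_mono (μ : Measure ℝ) [IsProbabilityMeasure μ]
    (hsupp : μ (Icc (0:ℝ) 1) = 1) {p q : ℝ} (hpq : p ≤ q) (hq : q ≤ 1) :
    quantile μ p ≤ quantile μ q := by
  apply csInf_le_csInf
  · exact ⟨0, fun t ht => ht.1.1⟩
  · exact ⟨1, quantileSet_nonempty μ hsupp hq⟩
  · exact fun t ht => ⟨ht.1, le_trans (ENNReal.ofReal_le_ofReal hpq) ht.2⟩

/-- The infimum defining the quantile is attained. -/
lemma quantile_mem (μ : Measure ℝ) [IsProbabilityMeasure μ]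
    (hsupp : μ (Icc (0:ℝ) 1) = 1) {p : ℝ} (hp : p ≤ 1) :
    quantile μ p ∈ {t ∈ Icc (0:ℝ) 1 | ENNReal.ofReal p ≤ μ (Icc 0 t)} := by
  set A := {t ∈ Icc (0:ℝ) 1 | ENNReal.ofReal p ≤ μ (Icc 0 t)} with hA
  have hne : A.Nonempty := ⟨1, quantileSet_nonempty μ hsupp hp⟩
  have hbdd : BddBelow A := ⟨0, fun t ht => ht.1.1⟩
  obtain ⟨u, hu_anti, hu_tend, hu_mem⟩ := exists_seq_tendsto_sInf hne hbdd
  have ht0 : (0:ℝ) ≤ sInf A := le_csInf hne fun t ht => ht.1.1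
  have ht1 : sInf A ≤ 1 := csInf_le hbdd (quantileSet_nonempty μ hsupp hp)
  have hInt : Icc (0:ℝ) (sInf A) = ⋂ n, Icc 0 (u n) := by
    ext x
    simp only [mem_Icc, mem_iInter]
    constructor
    · rintro ⟨hx0, hx⟩ n
      exact ⟨hx0, hx.trans (csInf_le hbdd (hu_mem n))⟩
    · intro h
      exact ⟨(h 0).1, ge_of_tendsto hu_tend (Eventually.of_forall fun n => (h n).2)⟩
  have hmeas : μ (Icc (0:ℝ) (sInf A)) = ⨅ n, μ (Icc 0 (u n)) := by
    rw [hInt]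
    refine Antitone.measure_iInter (fun n m hnm => Icc_subset_Icc_right (hu_anti hnm))
      (fun n => measurableSet_Icc.nullMeasurableSet) ⟨0, measure_ne_top μ _⟩
  refine ⟨⟨ht0, ht1⟩, ?_⟩
  rw [show quantile μ p = sInf A from rfl, hmeas]
  exact le_iInf fun n => (hu_mem n).2

/-- Below the quantile, the cdf stays below `p`. -/
lemma measure_Ico_quantile_le (μ : Measure ℝ) [IsProbabilityMeasure μ]
    (hsupp : μ (Icc (0:ℝ) 1) = 1) {p : ℝ} (hp : p ≤ 1) :
    μ (Ico (0:ℝ) (quantile μ p)) ≤ ENNReal.ofReal p := by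
  set A := {t ∈ Icc (0:ℝ) 1 | ENNReal.ofReal p ≤ μ (Icc 0 t)} with hA
  set t := quantile μ p with htdef
  have hbdd : BddBelow A := ⟨0, fun s hs => hs.1.1⟩
  have hmem := quantile_mem μ hsupp hp
  have ht0 : (0:ℝ) ≤ t := hmem.1.1
  have ht1 : t ≤ 1 := hmem.1.2
  rcases eq_or_lt_of_le ht0 with h0 | h0
  · simp [← h0]
  · -- t > 0
    set v : ℕ → ℝ := fun n => max 0 (t - 1/(n+1)) with hv
    have hvlt : ∀ n, v n < t := by
      intro n
      apply max_lt h0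
      have : (0:ℝ) < 1/(n+1) := by positivity
      linarith
    have hvmem : ∀ n, v n ∈ Icc (0:ℝ) 1 := fun n => ⟨le_max_left _ _, (hvlt n).le.trans ht1⟩
    have hUnion : Ico (0:ℝ) t = ⋃ n, Icc 0 (v n) := by
      ext x
      simp only [mem_Ico, mem_iUnion, mem_Icc]
      constructor
      · rintro ⟨hx0, hxt⟩
        obtain ⟨n, hn⟩ := exists_nat_one_div_lt (sub_pos.2 hxt)
        exact ⟨n, hx0, le_max_of_le_right (by linarith)⟩
      · rintro ⟨n, hx0, hxv⟩
        exact ⟨hx0, hxv.trans_lt (hvlt n)⟩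
    have hlt : ∀ n, μ (Icc 0 (v n)) < ENNReal.ofReal p := by
      intro n
      by_contra h
      push_neg at h
      exact absurd (csInf_le hbdd ⟨hvmem n, h⟩) (not_le.2 (hvlt n))
    have hmono : Monotone fun n => Icc (0:ℝ) (v n) := by
      intro n m hnm
      apply Icc_subset_Icc_right
      apply max_le_max le_rfl
      have h1 : (1:ℝ)/(m+1) ≤ 1/(n+1) := by
        apply one_div_le_one_div_of_le (by positivity)
        have := (Nat.cast_le (α := ℝ)).2 hnm
        linarith
      linarith
    rw [hUnion, hmono.measure_iUnion]
    exact iSup_le fun n => (hlt n).le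

/-- Key inequality: if the quantile takes the same value at `a < b`, then the
atom at that value has mass at least `b - a`. -/
lemma quantile_eq_atom (μ : Measure ℝ) [IsProbabilityMeasure μ]
    (hsupp : μ (Icc (0:ℝ) 1) = 1) {a b : ℝ} (ha : 0 ≤ a) (hab : a ≤ b) (hb : b ≤ 1)
    (heq : quantile μ a = quantile μ b) :
    ENNReal.ofReal b ≤ ENNReal.ofReal a + μ {quantile μ b} := by
  set t := quantile μ b with htdef
  have hmem := quantile_mem μ hsupp hb
  have ht0 : (0:ℝ) ≤ t := hmem.1.1
  have hsplit : μ (Icc (0:ℝ) t) = μ (Ico 0 t) + μ {t} := by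
    rw [← Ico_union_right ht0, measure_union (by simp [Set.disjoint_singleton_right])
      (measurableSet_singleton t)]
  have h1 : ENNReal.ofReal b ≤ μ (Icc (0:ℝ) t) := hmem.2
  have h2 : μ (Ico (0:ℝ) t) ≤ ENNReal.ofReal a := by
    have := measure_Ico_quantile_le μ hsupp (hab.trans hb)
    rwa [heq] at this
  calc ENNReal.ofReal b ≤ μ (Ico (0:ℝ) t) + μ {t} := by rw [← hsplit]; exact h1
    _ ≤ ENNReal.ofReal a + μ {t} := add_le_add_left h2 _

/-- In each half of the circle, there is at most one point where the quantile
agrees with its value at the antipode. -/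
lemma halfSet_subsingleton (μ : Measure ℝ) [IsProbabilityMeasure μ]
    (hsupp : μ (Icc (0:ℝ) 1) = 1) (hatom : ∀ t : ℝ, μ {t} ≤ 1/2) :
    ∀ w₁ w₂ : ℝ, w₁ ∈ Ico (0:ℝ) (1/2) → w₂ ∈ Ico (0:ℝ) (1/2) →
      quantile μ w₁ = quantile μ (w₁ + 1/2) → quantile μ w₂ = quantile μ (w₂ + 1/2) →
      w₁ = w₂ := by
  have key : ∀ w₁ w₂ : ℝ, w₁ ∈ Ico (0:ℝ) (1/2) → w₂ ∈ Ico (0:ℝ) (1/2) →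
      quantile μ w₁ = quantile μ (w₁ + 1/2) → quantile μ w₂ = quantile μ (w₂ + 1/2) →
      w₁ < w₂ → False := by
    intro w₁ w₂ hw₁ hw₂ he₁ he₂ hlt
    obtain ⟨hw₁0, hw₁h⟩ := hw₁
    obtain ⟨hw₂0, hw₂h⟩ := hw₂
    -- quantile is constant between w₁ and w₂ + 1/2
    have m1 : quantile μ w₁ ≤ quantile μ w₂ :=
      quantile_mono μ hsupp hlt.le (by linarith)
    have m2 : quantile μ w₂ ≤ quantile μ (w₁ + 1/2) :=
      quantile_mono μ hsupp (by linarith) (by linarith)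
    have hc : quantile μ w₁ = quantile μ w₂ := le_antisymm m1 (he₁ ▸ m2)
    have hc2 : quantile μ w₁ = quantile μ (w₂ + 1/2) := hc.trans he₂
    have hkey := quantile_eq_atom μ hsupp hw₁0 (by linarith : w₁ ≤ w₂ + 1/2)
      (by linarith) hc2
    have h12 : (1/2 : ENNReal) = ENNReal.ofReal (1/2) := by
      rw [ENNReal.ofReal_div_of_pos (by norm_num : (0:ℝ) < 2)]
      norm_num
    have hhalf : μ {quantile μ (w₂ + 1/2)} ≤ ENNReal.ofReal (1/2) :=
      (hatom _).trans_eq h12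
    have : ENNReal.ofReal (w₂ + 1/2) ≤ ENNReal.ofReal (w₁ + 1/2) := by
      calc ENNReal.ofReal (w₂ + 1/2) ≤ ENNReal.ofReal w₁ + μ {quantile μ (w₂ + 1/2)} := hkey
        _ ≤ ENNReal.ofReal w₁ + ENNReal.ofReal (1/2) := add_le_add_right hhalf _
        _ = ENNReal.ofReal (w₁ + 1/2) := (ENNReal.ofReal_add hw₁0 (by norm_num)).symm
    have := (ENNReal.ofReal_le_ofReal_iff (by linarith)).1 this
    linarith
  intro w₁ w₂ hw₁ hw₂ he₁ he₂
  rcases lt_trichotomy w₁ w₂ with h | h | h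
  · exact absurd (key w₁ w₂ hw₁ hw₂ he₁ he₂ h) id
  · exact h
  · exact absurd (key w₂ w₁ hw₂ hw₁ he₂ he₁ h) id

/-- If `μ` is a Borel probability measure on `[0,1]` with no atom of mass greater
than `1/2`, then `{z ∈ [0,1) : Q^μ(z) = Q^μ(φ(z))}` is Lebesgue null. -/
theorem quantile_halfRot_ne (μ : Measure ℝ) [IsProbabilityMeasure μ]
    (hsupp : μ (Icc (0:ℝ) 1) = 1)
    (hatom : ∀ t : ℝ, μ {t} ≤ 1/2) :
    volume {z ∈ Ico (0:ℝ) 1 | quantile μ z = quantile μ (halfRot z)} = 0 := by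
  set S := {z ∈ Ico (0:ℝ) 1 | quantile μ z = quantile μ (halfRot z)} with hS
  have hsub : S ⊆ (S ∩ Ico 0 (1/2)) ∪ (S ∩ Ico (1/2) 1) := by
    intro z hz
    rcases lt_or_ge z (1/2) with h | h
    · exact Or.inl ⟨hz, hz.1.1, h⟩
    · exact Or.inr ⟨hz, h, hz.1.2⟩
  refine measure_mono_null hsub (measure_union_null ?_ ?_)
  · refine Set.Subsingleton.measure_zero ?_ _
    intro z₁ hz₁ z₂ hz₂
    have e₁ : halfRot z₁ = z₁ + 1/2 := Int.fract_eq_self.2 ⟨by linarith [hz₁.2.1], by linarith [hz₁.2.2]⟩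
    have e₂ : halfRot z₂ = z₂ + 1/2 := Int.fract_eq_self.2 ⟨by linarith [hz₂.2.1], by linarith [hz₂.2.2]⟩
    have h₁' : quantile μ z₁ = quantile μ (z₁ + 1/2) := by rw [← e₁]; exact hz₁.1.2
    have h₂' : quantile μ z₂ = quantile μ (z₂ + 1/2) := by rw [← e₂]; exact hz₂.1.2
    exact halfSet_subsingleton μ hsupp hatom z₁ z₂ hz₁.2 hz₂.2 h₁' h₂'
  · refine Set.Subsingleton.measure_zero ?_ _
    intro z₁ hz₁ z₂ hz₂
    have e₁ : halfRot z₁ = z₁ - 1/2 := by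
      unfold halfRot
      rw [show z₁ + 1/2 = (z₁ - 1/2) + 1 by ring, Int.fract_add_one,
        Int.fract_eq_self.2 ⟨by linarith [hz₁.2.1], by linarith [hz₁.2.2]⟩]
    have e₂ : halfRot z₂ = z₂ - 1/2 := by
      unfold halfRot
      rw [show z₂ + 1/2 = (z₂ - 1/2) + 1 by ring, Int.fract_add_one,
        Int.fract_eq_self.2 ⟨by linarith [hz₂.2.1], by linarith [hz₂.2.2]⟩]
    have h := halfSet_subsingleton μ hsupp hatom (z₁ - 1/2) (z₂ - 1/2)
      ⟨by linarith [hz₁.2.1], by linarith [hz₁.2.2]⟩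
      ⟨by linarith [hz₂.2.1], by linarith [hz₂.2.2]⟩
      (by rw [show z₁ - 1/2 + 1/2 = z₁ by ring]; have := hz₁.1.2; rw [e₁] at this; exact this.symm)
      (by rw [show z₂ - 1/2 + 1/2 = z₂ by ring]; have := hz₂.1.2; rw [e₂] at this; exact this.symm)
    linarith
end

section
/- Let a, b ∈ ℝ with |a − b| ≥ 4, let w : [0,1] → ℝ be continuous with sup_{s,r∈[0,1]} |w_s − w_r| ≤ 1/16, and let φ : [0,1] → [0,∞) with ∫₀¹ φ = 1. Define for (y,z) ∈ [1/2,2]×[0,2π] the quantity D(y,z) = ∫₀¹ φ(s)·(sin(y(a−b+w_s)+z) − sin(y·w_s+z)) ds. Then (1/(3π)) ∫₀^{2π} ∫_{1/2}^{2} D(y,z)² dy dz ≥ 1 − 2·sup_{s,r}|w_s−w_r|² − (4/3)·(|a−b| − sup_{s,r}|w_s−w_r|)^{−1} ≥ 1/2. -/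
open Real Set MeasureTheory

section ShearAux

/-- Fubini for interval integrals of continuous functions on a rectangle. -/
lemma shear_fubini {a b c d : ℝ} (hab : a ≤ b) (hcd : c ≤ d) {f : ℝ → ℝ → ℝ}
    (hf : Continuous (Function.uncurry f)) :
    (∫ x in a..b, ∫ y in c..d, f x y) = ∫ y in c..d, ∫ x in a..b, f x y := by
  have hint : Integrable (Function.uncurry f)
      ((volume.restrict (Ioc a b)).prod (volume.restrict (Ioc c d))) := by
    rw [Measure.prod_restrict, ← Measure.volume_eq_prod]
    exact (hf.continuousOn.integrableOn_compact (isCompact_Icc.prod isCompact_Icc)).mono_set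
      (Set.prod_mono Ioc_subset_Icc_self Ioc_subset_Icc_self)
  simp only [intervalIntegral.integral_of_le hab, intervalIntegral.integral_of_le hcd]
  exact MeasureTheory.integral_integral_swap hint

lemma shear_cos_osc_bound {e : ℝ} (he : e ≠ 0) :
    |∫ y in (1/2:ℝ)..2, cos (y*e)| ≤ 2/|e| := by
  rw [intervalIntegral.integral_comp_mul_right Real.cos he, integral_cos]
  have h3 : ∀ p q : ℝ, |sin p - sin q| ≤ 2 := fun p q => by
    have := abs_sin_le_one p; have := abs_sin_le_one q
    calc |sin p - sin q| ≤ |sin p| + |sin q| := abs_sub _ _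
      _ ≤ 2 := by linarith
  rw [smul_eq_mul, abs_mul, abs_inv]
  calc |e|⁻¹ * |sin _ - sin _| ≤ |e|⁻¹ * 2 :=
        mul_le_mul_of_nonneg_left (h3 _ _) (inv_nonneg.mpr (abs_nonneg e))
    _ = 2/|e| := by ring

lemma shear_cos_main_bound {δ M : ℝ} (hδ : |δ| ≤ M) :
    (3:ℝ) - 6*M^2 ≤ ∫ y in (1/2:ℝ)..2, 2*cos (y*δ) := by
  have hδ2 : δ^2 ≤ M^2 := sq_le_sq' (neg_le_of_abs_le hδ) (le_of_abs_le hδ)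
  have c1 : Continuous fun y : ℝ => 2 - y^2*δ^2 := by continuity
  have c2 : Continuous fun y : ℝ => 2*cos (y*δ) :=
    continuous_const.mul (Real.continuous_cos.comp (continuous_id.mul continuous_const))
  have c3 : Continuous fun y : ℝ => y^2*δ^2 := by continuity
  have key : (∫ y in (1/2:ℝ)..2, (2 - y^2*δ^2)) ≤ ∫ y in (1/2:ℝ)..2, 2*cos (y*δ) := by
    apply intervalIntegral.integral_mono_on (by norm_num)
      (c1.intervalIntegrable _ _) (c2.intervalIntegrable _ _)
    intro y hy
    have := Real.one_sub_sq_div_two_le_cos (x := y*δ)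
    nlinarith [this]
  have comp : (∫ y in (1/2:ℝ)..2, (2 - y^2*δ^2)) = 3 - (21/8)*δ^2 := by
    rw [intervalIntegral.integral_sub ((continuous_const (y := (2:ℝ))).intervalIntegrable _ _)
      (c3.intervalIntegrable _ _)]
    rw [intervalIntegral.integral_const, intervalIntegral.integral_mul_const, integral_pow]
    norm_num
  nlinarith [key]

lemma shear_kernel_bound {c δ M : ℝ} (hc : 4 ≤ |c|) (hδ : |δ| ≤ M) (hM : M ≤ 1/16) :
    3 - 6*M^2 - 4*(|c| - M)⁻¹
      ≤ ∫ y in (1/2:ℝ)..2, (2*cos (y*δ) - cos (y*(c+δ)) - cos (y*(δ-c))) := by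
  have hM0 : 0 ≤ M := le_trans (abs_nonneg δ) hδ
  have hcM : (0:ℝ) < |c| - M := by linarith [hM.trans (by norm_num : (1/16:ℝ) ≤ 4)]
  have h1 : |c| - M ≤ |c + δ| := by
    have h := abs_sub_abs_le_abs_sub c (-δ)
    rw [abs_neg, sub_neg_eq_add] at h
    linarith
  have h2 : |c| - M ≤ |δ - c| := by
    have : |c| - |δ| ≤ |δ - c| := by
      have := abs_sub_abs_le_abs_sub c δ
      calc |c| - |δ| ≤ |c - δ| := this
        _ = |δ - c| := abs_sub_comm _ _
    linarith
  have he1 : c + δ ≠ 0 := by intro h; rw [h] at h1; simp at h1; linarith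
  have he2 : δ - c ≠ 0 := by intro h; rw [h] at h2; simp at h2; linarith
  have b1 : |∫ y in (1/2:ℝ)..2, cos (y*(c+δ))| ≤ 2*(|c| - M)⁻¹ := by
    refine (shear_cos_osc_bound he1).trans ?_
    rw [div_eq_mul_inv]
    gcongr
  have b2 : |∫ y in (1/2:ℝ)..2, cos (y*(δ-c))| ≤ 2*(|c| - M)⁻¹ := by
    refine (shear_cos_osc_bound he2).trans ?_
    rw [div_eq_mul_inv]
    gcongr
  have cmain := shear_cos_main_bound hδ
  have cc1 : Continuous fun y : ℝ => 2*cos (y*δ) :=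
    continuous_const.mul (Real.continuous_cos.comp (continuous_id.mul continuous_const))
  have cc2 : Continuous fun y : ℝ => cos (y*(c+δ)) :=
    Real.continuous_cos.comp (continuous_id.mul continuous_const)
  have cc3 : Continuous fun y : ℝ => cos (y*(δ-c)) :=
    Real.continuous_cos.comp (continuous_id.mul continuous_const)
  rw [intervalIntegral.integral_sub ((cc1.intervalIntegrable _ _).sub (cc2.intervalIntegrable _ _))
      (cc3.intervalIntegrable _ _),
    intervalIntegral.integral_sub (cc1.intervalIntegrable _ _) (cc2.intervalIntegrable _ _)]
  have a1 := le_of_abs_le b1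
  have a2 := le_of_abs_le b2
  linarith

/-- `∫₀^{2π} (p cos z + q sin z)² dz = π (p² + q²)`. -/
lemma shear_zint (p q : ℝ) :
    (∫ z in (0:ℝ)..(2*π), (p*cos z + q*sin z)^2) = π*(p^2+q^2) := by
  have c1 : Continuous fun z : ℝ => p^2*cos z^2 := by continuity
  have c2 : Continuous fun z : ℝ => (2*p*q)*(sin z*cos z) := by continuity
  have c3 : Continuous fun z : ℝ => q^2*sin z^2 := by continuity
  have hcongr : EqOn (fun z : ℝ => (p*cos z + q*sin z)^2)
      (fun z => p^2*cos z^2 + ((2*p*q)*(sin z*cos z) + q^2*sin z^2)) (Set.uIcc 0 (2*π)) :=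
    fun z _ => by ring
  rw [intervalIntegral.integral_congr hcongr,
    intervalIntegral.integral_add (g := fun z => (2*p*q)*(sin z*cos z) + q^2*sin z^2)
      (c1.intervalIntegrable _ _) ((c2.add c3).intervalIntegrable _ _),
    intervalIntegral.integral_add (c2.intervalIntegrable _ _) (c3.intervalIntegrable _ _),
    intervalIntegral.integral_const_mul, intervalIntegral.integral_const_mul,
    intervalIntegral.integral_const_mul,
    integral_cos_sq, integral_sin_sq, integral_sin_mul_cos₁]
  simp [Real.sin_two_pi, Real.cos_two_pi]
  ring

noncomputable def shearP (c : ℝ) (w φ : ℝ → ℝ) (y : ℝ) : ℝ :=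
  ∫ s in (0:ℝ)..1, φ s * (Real.sin (y*(c + w s)) - Real.sin (y * w s))

noncomputable def shearQ (c : ℝ) (w φ : ℝ → ℝ) (y : ℝ) : ℝ :=
  ∫ s in (0:ℝ)..1, φ s * (Real.cos (y*(c + w s)) - Real.cos (y * w s))

section Main

variable {c : ℝ} {w φ : ℝ → ℝ}

lemma shear_cont_f (hw : Continuous w) (hφ : Continuous φ) :
    Continuous (Function.uncurry fun (y s : ℝ) =>
      φ s * (Real.sin (y*(c + w s)) - Real.sin (y * w s))) := by
  apply Continuous.mul (hφ.comp continuous_snd)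
  apply Continuous.sub
  · exact Real.continuous_sin.comp
      (continuous_fst.mul (continuous_const.add (hw.comp continuous_snd)))
  · exact Real.continuous_sin.comp (continuous_fst.mul (hw.comp continuous_snd))

lemma shear_cont_g (hw : Continuous w) (hφ : Continuous φ) :
    Continuous (Function.uncurry fun (y s : ℝ) =>
      φ s * (Real.cos (y*(c + w s)) - Real.cos (y * w s))) := by
  apply Continuous.mul (hφ.comp continuous_snd)
  apply Continuous.sub
  · exact Real.continuous_cos.comp
      (continuous_fst.mul (continuous_const.add (hw.comp continuous_snd)))
  · exact Real.continuous_cos.comp (continuous_fst.mul (hw.comp continuous_snd))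

lemma shearP_cont (hw : Continuous w) (hφ : Continuous φ) :
    Continuous (shearP c w φ) :=
  intervalIntegral.continuous_parametric_intervalIntegral_of_continuous'
    (shear_cont_f hw hφ) 0 1

lemma shearQ_cont (hw : Continuous w) (hφ : Continuous φ) :
    Continuous (shearQ c w φ) :=
  intervalIntegral.continuous_parametric_intervalIntegral_of_continuous'
    (shear_cont_g hw hφ) 0 1

/-- Decomposition of `D` using angle addition. -/
lemma shear_decomp (hw : Continuous w) (hφ : Continuous φ) (y z : ℝ) :
    (∫ s in (0:ℝ)..1, φ s * (Real.sin (y * (c + w s) + z) - Real.sin (y * w s + z)))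
      = shearP c w φ y * Real.cos z + shearQ c w φ y * Real.sin z := by
  unfold shearP shearQ
  rw [← intervalIntegral.integral_mul_const, ← intervalIntegral.integral_mul_const,
    ← intervalIntegral.integral_add
      (f := fun s => φ s * (Real.sin (y*(c + w s)) - Real.sin (y * w s)) * Real.cos z)
      (g := fun s => φ s * (Real.cos (y*(c + w s)) - Real.cos (y * w s)) * Real.sin z)
      (((shear_cont_f hw hφ).uncurry_left y).mul continuous_const |>.intervalIntegrable _ _)
      (((shear_cont_g hw hφ).uncurry_left y).mul continuous_const |>.intervalIntegrable _ _)]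
  apply intervalIntegral.integral_congr
  intro s _
  simp only [Real.sin_add]
  ring

/-- The double-integral kernel. -/
noncomputable def shearK (c : ℝ) (w : ℝ → ℝ) (y s r : ℝ) : ℝ :=
  Real.cos (y*(c + w s) - y*(c + w r)) + Real.cos (y * w s - y * w r)
    - Real.cos (y*(c + w s) - y * w r) - Real.cos (y * w s - y*(c + w r))

lemma shearK_cont (hw : Continuous w) :
    Continuous (fun p : (ℝ × ℝ) × ℝ => shearK c w p.1.1 p.1.2 p.2) := by
  unfold shearK
  have hy : Continuous fun p : (ℝ × ℝ) × ℝ => p.1.1 := continuous_fst.fst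
  have hs : Continuous fun p : (ℝ × ℝ) × ℝ => w p.1.2 := hw.comp continuous_fst.snd
  have hr : Continuous fun p : (ℝ × ℝ) × ℝ => w p.2 := hw.comp continuous_snd
  fun_prop

/-- Pointwise trig identity. -/
lemma shear_trig (y s r : ℝ) :
    (φ s * (Real.sin (y*(c + w s)) - Real.sin (y * w s)))
        * (φ r * (Real.sin (y*(c + w r)) - Real.sin (y * w r)))
      + (φ s * (Real.cos (y*(c + w s)) - Real.cos (y * w s)))
        * (φ r * (Real.cos (y*(c + w r)) - Real.cos (y * w r)))
      = φ s * φ r * shearK c w y s r := by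
  unfold shearK
  simp only [Real.cos_sub]
  ring

/-- square-expansion for fixed `y`. -/
lemma shear_sq (hw : Continuous w) (hφ : Continuous φ) (y : ℝ) :
    shearP c w φ y ^ 2 + shearQ c w φ y ^ 2
      = ∫ s in (0:ℝ)..1, ∫ r in (0:ℝ)..1, φ s * φ r * shearK c w y s r := by
  have hfc : ∀ u : ℝ, Continuous fun s => φ s * (Real.sin (y*(c + w s)) - Real.sin (y * w s)) :=
    fun u => (shear_cont_f hw hφ).uncurry_left y
  have hf : Continuous fun s => φ s * (Real.sin (y*(c + w s)) - Real.sin (y * w s)) :=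
    (shear_cont_f hw hφ).uncurry_left y
  have hg : Continuous fun s => φ s * (Real.cos (y*(c + w s)) - Real.cos (y * w s)) :=
    (shear_cont_g hw hφ).uncurry_left y
  have hP2 : shearP c w φ y ^ 2 = ∫ s in (0:ℝ)..1,
      (φ s * (Real.sin (y*(c + w s)) - Real.sin (y * w s))) * shearP c w φ y := by
    rw [intervalIntegral.integral_mul_const, sq]; rfl
  have hQ2 : shearQ c w φ y ^ 2 = ∫ s in (0:ℝ)..1,
      (φ s * (Real.cos (y*(c + w s)) - Real.cos (y * w s))) * shearQ c w φ y := by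
    rw [intervalIntegral.integral_mul_const, sq]; rfl
  rw [hP2, hQ2, ← intervalIntegral.integral_add
      (f := fun s => φ s * (Real.sin (y*(c + w s)) - Real.sin (y * w s)) * shearP c w φ y)
      (g := fun s => φ s * (Real.cos (y*(c + w s)) - Real.cos (y * w s)) * shearQ c w φ y)
      ((hf.mul continuous_const).intervalIntegrable _ _)
      ((hg.mul continuous_const).intervalIntegrable _ _)]
  apply intervalIntegral.integral_congr
  intro s _
  show (φ s * _) * shearP c w φ y + (φ s * _) * shearQ c w φ y = _
  unfold shearP shearQ
  rw [← intervalIntegral.integral_const_mul, ← intervalIntegral.integral_const_mul,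
    ← intervalIntegral.integral_add
      (f := fun r => (φ s * (Real.sin (y*(c + w s)) - Real.sin (y * w s)))
        * (φ r * (Real.sin (y*(c + w r)) - Real.sin (y * w r))))
      (g := fun r => (φ s * (Real.cos (y*(c + w s)) - Real.cos (y * w s)))
        * (φ r * (Real.cos (y*(c + w r)) - Real.cos (y * w r))))
      ((continuous_const.mul hf).intervalIntegrable _ _)
      ((continuous_const.mul hg).intervalIntegrable _ _)]
  apply intervalIntegral.integral_congr
  intro r _
  exact shear_trig y s r

/-- Rewriting the `y`-integral of the kernel into the standard form. -/
lemma shear_Kint (s r : ℝ) :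
    (∫ y in (1/2:ℝ)..2, shearK c w y s r)
      = ∫ y in (1/2:ℝ)..2, (2*Real.cos (y*(w s - w r))
          - Real.cos (y*(c + (w s - w r))) - Real.cos (y*((w s - w r) - c))) := by
  apply intervalIntegral.integral_congr
  intro y _
  show shearK c w y s r = 2*Real.cos (y*(w s - w r))
    - Real.cos (y*(c + (w s - w r))) - Real.cos (y*((w s - w r) - c))
  unfold shearK
  rw [show y*(c + w s) - y*(c + w r) = y*(w s - w r) from by ring,
    show y * w s - y * w r = y*(w s - w r) from by ring,
    show y*(c + w s) - y * w r = y*(c + (w s - w r)) from by ring,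
    show y * w s - y*(c + w r) = y*((w s - w r) - c) from by ring]
  ring

/-- The main lower bound on `∫ (P² + Q²)`. -/
lemma shear_aux_main (hc : 4 ≤ |c|) {M : ℝ} (hM16 : M ≤ 1/16)
    (hw : Continuous w)
    (hosc : ∀ s ∈ Icc (0:ℝ) 1, ∀ r ∈ Icc (0:ℝ) 1, |w s - w r| ≤ M)
    (hφ : Continuous φ) (hφpos : ∀ s, 0 ≤ φ s)
    (hφint : ∫ s in (0:ℝ)..1, φ s = 1) :
    3 - 6*M^2 - 4*(|c| - M)⁻¹
      ≤ ∫ y in (1/2:ℝ)..2, (shearP c w φ y ^ 2 + shearQ c w φ y ^ 2) := by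
  -- continuity facts
  have hKyr : ∀ s : ℝ, Continuous (Function.uncurry fun y r : ℝ =>
      φ s * φ r * shearK c w y s r) := by
    intro s
    have h2 : Continuous fun q : ℝ × ℝ => shearK c w q.1 s q.2 := by
      unfold shearK; fun_prop
    exact (continuous_const.mul (hφ.comp continuous_snd)).mul h2
  have hG : Continuous (Function.uncurry fun y s : ℝ =>
      ∫ r in (0:ℝ)..1, φ s * φ r * shearK c w y s r) := by
    apply intervalIntegral.continuous_parametric_intervalIntegral_of_continuous' (μ := volume)
      (f := fun p : ℝ × ℝ => fun r => φ p.2 * φ r * shearK c w p.1 p.2 r)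
    have h2 : Continuous fun q : (ℝ × ℝ) × ℝ => shearK c w q.1.1 q.1.2 q.2 := by
      unfold shearK; fun_prop
    exact ((hφ.comp continuous_fst.snd).mul (hφ.comp continuous_snd)).mul h2
  -- rewrite integrand via shear_sq
  have e1 : EqOn (fun y : ℝ => shearP c w φ y ^ 2 + shearQ c w φ y ^ 2)
      (fun y : ℝ => ∫ s in (0:ℝ)..1, ∫ r in (0:ℝ)..1, φ s * φ r * shearK c w y s r)
      (uIcc (1/2:ℝ) 2) := fun y _ => shear_sq hw hφ y
  rw [intervalIntegral.integral_congr e1]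
  -- swap y with s
  rw [shear_fubini (by norm_num) (by norm_num) hG]
  -- swap y with r inside
  have swap2 : ∀ s : ℝ, (∫ y in (1/2:ℝ)..2, ∫ r in (0:ℝ)..1, φ s * φ r * shearK c w y s r)
      = ∫ r in (0:ℝ)..1, φ s * φ r * ∫ y in (1/2:ℝ)..2, shearK c w y s r := by
    intro s
    rw [shear_fubini (by norm_num) (by norm_num) (hKyr s)]
    apply intervalIntegral.integral_congr
    intro r _
    exact intervalIntegral.integral_const_mul _ _
  -- now bound
  have hcM : (0:ℝ) < |c| - M := by
    have hM0 : 0 ≤ M := le_trans (abs_nonneg (w 0 - w 0))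
      (hosc 0 ⟨le_refl 0, zero_le_one⟩ 0 ⟨le_refl 0, zero_le_one⟩)
    linarith [hM16.trans (by norm_num : (1/16:ℝ) ≤ 4)]
  set L : ℝ := 3 - 6*M^2 - 4*(|c| - M)⁻¹ with hL
  have hYbound : ∀ s ∈ Icc (0:ℝ) 1, ∀ r ∈ Icc (0:ℝ) 1,
      L ≤ ∫ y in (1/2:ℝ)..2, shearK c w y s r := by
    intro s hs r hr
    rw [shear_Kint]
    exact shear_kernel_bound hc (hosc s hs r hr) hM16
  -- continuity of Y
  have hY : Continuous (Function.uncurry fun s r : ℝ => ∫ y in (1/2:ℝ)..2, shearK c w y s r) := by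
    apply intervalIntegral.continuous_parametric_intervalIntegral_of_continuous' (μ := volume)
      (f := fun p : ℝ × ℝ => fun y => shearK c w y p.1 p.2)
    have h2 : Continuous fun q : (ℝ × ℝ) × ℝ => shearK c w q.2 q.1.1 q.1.2 := by
      unfold shearK; fun_prop
    exact h2
  have inner_bound : ∀ s ∈ Icc (0:ℝ) 1,
      L * φ s ≤ ∫ r in (0:ℝ)..1, φ s * φ r * ∫ y in (1/2:ℝ)..2, shearK c w y s r := by
    intro s hs
    have : (∫ r in (0:ℝ)..1, (L * φ s) * φ r)
        ≤ ∫ r in (0:ℝ)..1, φ s * φ r * ∫ y in (1/2:ℝ)..2, shearK c w y s r := by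
      apply intervalIntegral.integral_mono_on zero_le_one
        ((continuous_const.mul hφ).intervalIntegrable _ _)
        ((((hφ.comp continuous_const).mul hφ |>.mul (hY.uncurry_left s))).intervalIntegrable _ _)
      intro r hr
      have h1 : 0 ≤ φ s * φ r := mul_nonneg (hφpos s) (hφpos r)
      have h2 := hYbound s hs r hr
      calc L * φ s * φ r = L * (φ s * φ r) := by ring
        _ ≤ (∫ y in (1/2:ℝ)..2, shearK c w y s r) * (φ s * φ r) :=
          mul_le_mul_of_nonneg_right h2 h1
        _ = φ s * φ r * ∫ y in (1/2:ℝ)..2, shearK c w y s r := by ring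
    calc L * φ s = (L * φ s) * ∫ r in (0:ℝ)..1, φ r := by rw [hφint]; ring
      _ = ∫ r in (0:ℝ)..1, (L * φ s) * φ r := (intervalIntegral.integral_const_mul _ _).symm
      _ ≤ _ := this
  -- outer bound
  have hInnerCont : Continuous (fun s : ℝ =>
      ∫ r in (0:ℝ)..1, φ s * φ r * ∫ y in (1/2:ℝ)..2, shearK c w y s r) := by
    apply intervalIntegral.continuous_parametric_intervalIntegral_of_continuous' (μ := volume)
      (f := fun s : ℝ => fun r => φ s * φ r * ∫ y in (1/2:ℝ)..2, shearK c w y s r)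
    apply Continuous.mul
    · exact (hφ.comp continuous_fst).mul (hφ.comp continuous_snd)
    · exact hY
  have outer : (∫ s in (0:ℝ)..1, L * φ s)
      ≤ ∫ s in (0:ℝ)..1, ∫ r in (0:ℝ)..1, φ s * φ r * ∫ y in (1/2:ℝ)..2, shearK c w y s r := by
    apply intervalIntegral.integral_mono_on zero_le_one
      ((continuous_const.mul hφ).intervalIntegrable _ _)
      (hInnerCont.intervalIntegrable _ _)
    exact inner_bound
  have final : (∫ s in (0:ℝ)..1, L * φ s) = L := by
    rw [intervalIntegral.integral_const_mul, hφint, mul_one]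
  calc L = ∫ s in (0:ℝ)..1, L * φ s := final.symm
    _ ≤ ∫ s in (0:ℝ)..1, ∫ r in (0:ℝ)..1, φ s * φ r * ∫ y in (1/2:ℝ)..2, shearK c w y s r :=
        outer
    _ = ∫ s in (0:ℝ)..1, ∫ y in (1/2:ℝ)..2, ∫ r in (0:ℝ)..1, φ s * φ r * shearK c w y s r := by
        apply intervalIntegral.integral_congr
        intro s _
        exact (swap2 s).symm

end Main
end ShearAux

/-- Variance lower bound for a single hit of the random shear flow.  For initial
vertical coordinates `a,b` with `|a − b| ≥ 4`, a continuous noise path `w` with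
oscillation on `[0,1]` at most `M ≤ 1/16`, and a weight `φ ≥ 0` with `∫₀¹ φ = 1`,
the averaged square of
`D(y,z) = ∫₀¹ φ(s)(sin(y(a−b+w_s)+z) − sin(y·w_s+z)) ds`
over `(y,z) ∈ [1/2,2]×[0,2π]` satisfies
`(1/(3π)) ∫∫ D² ≥ 1 − 2M² − (4/3)(|a−b| − M)⁻¹ ≥ 1/2`. -/
theorem shear_hit_variance_lower_bound
    (a b : ℝ) (hab : 4 ≤ |a - b|)
    (w : ℝ → ℝ) (hw : Continuous w)
    (M : ℝ) (hM16 : M ≤ 1/16)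
    (hosc : ∀ s ∈ Icc (0:ℝ) 1, ∀ r ∈ Icc (0:ℝ) 1, |w s - w r| ≤ M)
    (φ : ℝ → ℝ) (hφ : Continuous φ) (hφpos : ∀ s, 0 ≤ φ s)
    (hφint : ∫ s in (0:ℝ)..1, φ s = 1)
    (D : ℝ → ℝ → ℝ)
    (hD : ∀ y z, D y z =
      ∫ s in (0:ℝ)..1, φ s * (Real.sin (y * (a - b + w s) + z) - Real.sin (y * w s + z))) :
    (1 / (3 * π)) * (∫ z in (0:ℝ)..(2 * π), ∫ y in (1/2 : ℝ)..2, (D y z) ^ 2)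
        ≥ 1 - 2 * M ^ 2 - (4/3) * (|a - b| - M)⁻¹
      ∧ 1 - 2 * M ^ 2 - (4/3) * (|a - b| - M)⁻¹ ≥ 1/2 := by
  have hpi : (0:ℝ) < π := Real.pi_pos
  have hDeq : ∀ y z : ℝ, D y z
      = shearP (a-b) w φ y * Real.cos z + shearQ (a-b) w φ y * Real.sin z := by
    intro y z
    rw [hD]
    exact shear_decomp hw hφ y z
  have hPc := shearP_cont (c := a-b) hw hφ
  have hQc := shearQ_cont (c := a-b) hw hφ
  have hcont : Continuous (Function.uncurry fun z y : ℝ =>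
      (shearP (a-b) w φ y * Real.cos z + shearQ (a-b) w φ y * Real.sin z)^2) := by
    apply Continuous.pow
    exact ((hPc.comp continuous_snd).mul (Real.continuous_cos.comp continuous_fst)).add
      ((hQc.comp continuous_snd).mul (Real.continuous_sin.comp continuous_fst))
  have step1 : (∫ z in (0:ℝ)..(2*π), ∫ y in (1/2:ℝ)..2, (D y z)^2)
      = ∫ y in (1/2:ℝ)..2, ∫ z in (0:ℝ)..(2*π),
          (shearP (a-b) w φ y * Real.cos z + shearQ (a-b) w φ y * Real.sin z)^2 := by
    rw [← shear_fubini (by positivity) (by norm_num) hcont]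
    apply intervalIntegral.integral_congr
    intro z _
    apply intervalIntegral.integral_congr
    intro y _
    show D y z ^ 2 = _
    rw [hDeq]
  have step2 : (∫ y in (1/2:ℝ)..2, ∫ z in (0:ℝ)..(2*π),
        (shearP (a-b) w φ y * Real.cos z + shearQ (a-b) w φ y * Real.sin z)^2)
      = π * ∫ y in (1/2:ℝ)..2, (shearP (a-b) w φ y ^ 2 + shearQ (a-b) w φ y ^ 2) := by
    rw [← intervalIntegral.integral_const_mul]
    apply intervalIntegral.integral_congr
    intro y _
    exact shear_zint _ _
  have hb := shear_aux_main (c := a-b) hab hM16 hw hosc hφ hφpos hφint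
  set T : ℝ := ∫ y in (1/2:ℝ)..2, (shearP (a-b) w φ y ^ 2 + shearQ (a-b) w φ y ^ 2) with hT
  have key : (1 / (3 * π)) * (∫ z in (0:ℝ)..(2*π), ∫ y in (1/2:ℝ)..2, (D y z)^2) = T/3 := by
    rw [step1, step2]
    field_simp
  have hM0 : 0 ≤ M := le_trans (abs_nonneg (w 0 - w 0))
    (hosc 0 ⟨le_refl 0, zero_le_one⟩ 0 ⟨le_refl 0, zero_le_one⟩)
  have hpos : (0:ℝ) < |a - b| - M := by
    linarith [hM16.trans (by norm_num : (1/16:ℝ) ≤ 4)]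
  have h63 : (63/16:ℝ) ≤ |a - b| - M := by linarith
  have hinv : (|a - b| - M)⁻¹ ≤ 16/63 := by
    calc (|a - b| - M)⁻¹ ≤ (63/16:ℝ)⁻¹ := inv_anti₀ (by norm_num) h63
      _ = 16/63 := by norm_num
  have hM2 : M^2 ≤ (1/16:ℝ)^2 := by nlinarith
  constructor
  · rw [ge_iff_le, key]
    linarith
  · rw [ge_iff_le]
    linarith
end

section
/- Let 𝒳, 𝒴 be Polish spaces with 𝒴 uncountable, let x ↦ μ_x be a Borel measurable map from 𝒳 to probability measures on 𝒴, and let ν be a Borel probability measure on 𝒳 such that for ν-almost every x, μ_x has no atom of mass greater than 1/2. Then there exists a Borel measurable map x ↦ γ_x from 𝒳 to probability measures on 𝒴 × 𝒴 such that for ν-almost every x, both marginals of γ_x equal μ_x and γ_x assigns zero mass to the diagonal {(y,y) : y ∈ 𝒴}. -/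
open MeasureTheory Set ProbabilityTheory Filter
open scoped ENNReal

namespace CouplingOffDiag

/-- the (left-continuous) quantile function of a measure on `ℝ` -/
noncomputable def qtl (ρ : Measure ℝ) (z : ℝ) : ℝ := sInf {t | z ≤ cdf ρ t}

variable {ρ : Measure ℝ} [IsProbabilityMeasure ρ]

lemma qtl_set_nonempty {z : ℝ} (hz : z < 1) : {t | z ≤ cdf ρ t}.Nonempty := by
  obtain ⟨t, ht⟩ := ((tendsto_cdf_atTop (μ := ρ)).eventually (eventually_ge_nhds hz)).exists
  exact ⟨t, ht⟩

lemma qtl_set_bddBelow {z : ℝ} (hz : 0 < z) : BddBelow {t | z ≤ cdf ρ t} := by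
  obtain ⟨t0, ht0⟩ := ((tendsto_cdf_atBot (μ := ρ)).eventually (eventually_lt_nhds hz)).exists
  refine ⟨t0, fun t ht => ?_⟩
  by_contra h
  push_neg at h
  exact absurd (ht.trans (monotone_cdf (μ := ρ) h.le)) (not_le.mpr ht0)

lemma qtl_le_iff {z t : ℝ} (hz0 : 0 < z) (hz1 : z < 1) : qtl ρ z ≤ t ↔ z ≤ cdf ρ t := by
  constructor
  · intro h
    have h2 : ∀ s ∈ Ioi t, z ≤ cdf ρ s := by
      intro s hs
      obtain ⟨u, hu, hus⟩ := exists_lt_of_csInf_lt (qtl_set_nonempty hz1) (lt_of_le_of_lt h hs)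
      exact le_trans hu (monotone_cdf (μ := ρ) hus.le)
    have hc : Tendsto (cdf ρ) (nhdsWithin t (Ioi t)) (nhds (cdf ρ t)) :=
      ((cdf ρ).right_continuous t).mono_left (nhdsWithin_mono _ Ioi_subset_Ici_self)
    exact ge_of_tendsto hc (eventually_nhdsWithin_of_forall h2)
  · intro h
    exact csInf_le (qtl_set_bddBelow hz0) h

lemma measure_Iio_qtl_le {z : ℝ} (hz0 : 0 < z) (hz1 : z < 1) :
    ρ (Iio (qtl ρ z)) ≤ ENNReal.ofReal z := by
  set c := qtl ρ z
  have hIic : ∀ t, t < c → ρ (Iic t) ≤ ENNReal.ofReal z := by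
    intro t ht
    have h1 : cdf ρ t ≤ z := by
      by_contra h
      push_neg at h
      exact absurd ((qtl_le_iff hz0 hz1).mpr h.le) (not_le.mpr ht)
    rw [← ofReal_cdf (μ := ρ)]
    exact ENNReal.ofReal_le_ofReal h1
  have hunion : Iio c = ⋃ n : ℕ, Iic (c - ((n : ℝ) + 1)⁻¹) := by
      ext y
      simp only [mem_Iio, mem_iUnion, mem_Iic]
      constructor
      · intro hy
        obtain ⟨n, hn⟩ := exists_nat_gt (c - y)⁻¹
        refine ⟨n, ?_⟩
        have hcy : 0 < c - y := by linarith
        have hn1 : (c - y)⁻¹ < (n : ℝ) + 1 := by linarith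
        have : ((n : ℝ) + 1)⁻¹ < c - y := (inv_lt_comm₀ hcy (by positivity)).mp hn1
        linarith
      · rintro ⟨n, hn⟩
        have : 0 < ((n : ℝ) + 1)⁻¹ := by positivity
        linarith
  rw [hunion]
  have hmono : Monotone fun n : ℕ => Iic (c - ((n : ℝ) + 1)⁻¹) := by
    intro a b hab
    apply Iic_subset_Iic.mpr
    have h1 : ((b : ℝ) + 1)⁻¹ ≤ ((a : ℝ) + 1)⁻¹ := by
      have : (a : ℝ) + 1 ≤ (b : ℝ) + 1 := by exact_mod_cast by omega
      gcongr
    linarith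
  refine le_of_tendsto' (tendsto_measure_iUnion_atTop hmono) fun n => ?_
  exact hIic _ (by
    have : 0 < ((n : ℝ) + 1)⁻¹ := by positivity
    linarith)

lemma ofReal_half : ENNReal.ofReal (2⁻¹ : ℝ) = 2⁻¹ := by
  rw [ENNReal.ofReal_inv_of_pos two_pos]
  norm_num

lemma qtl_props_of_mem {z : ℝ} (h : ∀ r : ℝ, ρ {r} ≤ 1/2)
    (hz : z ∈ Ioo (0:ℝ) 2⁻¹) (heq : qtl ρ z = qtl ρ (z + 2⁻¹)) :
    ρ (Iio (qtl ρ z)) = ENNReal.ofReal z ∧ 0 < ρ {qtl ρ z} := by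
  obtain ⟨hz0, hz2⟩ := hz
  set c := qtl ρ z with hc
  have hz1 : z < 1 := by linarith
  have hz0' : (0:ℝ) < z + 2⁻¹ := by linarith
  have hz1' : z + 2⁻¹ < 1 := by linarith
  -- upper bound for Iio
  have hIio : ρ (Iio c) ≤ ENNReal.ofReal z := measure_Iio_qtl_le hz0 hz1
  -- lower bound for Iic
  have hIic : ENNReal.ofReal (z + 2⁻¹) ≤ ρ (Iic c) := by
    have h1 : qtl ρ (z + 2⁻¹) ≤ c := le_of_eq heq.symm
    have h2 : z + 2⁻¹ ≤ cdf ρ c := (qtl_le_iff hz0' hz1').mp h1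
    rw [← ofReal_cdf (μ := ρ)]
    exact ENNReal.ofReal_le_ofReal h2
  have hsplit : ρ (Iic c) = ρ (Iio c) + ρ {c} := by
    rw [← Iio_union_right, measure_union (by simp) (measurableSet_singleton c)]
  have hofReal : ENNReal.ofReal (z + 2⁻¹) = ENNReal.ofReal z + 2⁻¹ := by
    rw [ENNReal.ofReal_add hz0.le (by norm_num), ofReal_half]
  have hhalf : ρ {c} ≤ 2⁻¹ := by simpa [one_div] using h c
  have hIioTop : ρ (Iio c) ≠ ⊤ := measure_ne_top ρ _
  constructor
  · refine le_antisymm hIio ?_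
    have : ENNReal.ofReal z + 2⁻¹ ≤ ρ (Iio c) + 2⁻¹ := by
      calc ENNReal.ofReal z + 2⁻¹ = ENNReal.ofReal (z + 2⁻¹) := hofReal.symm
        _ ≤ ρ (Iic c) := hIic
        _ = ρ (Iio c) + ρ {c} := hsplit
        _ ≤ ρ (Iio c) + 2⁻¹ := add_le_add_right hhalf _
    exact (ENNReal.add_le_add_iff_right (by norm_num)).mp this
  · have : ENNReal.ofReal z + 2⁻¹ ≤ ENNReal.ofReal z + ρ {c} := by
      calc ENNReal.ofReal z + 2⁻¹ = ENNReal.ofReal (z + 2⁻¹) := hofReal.symm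
        _ ≤ ρ (Iic c) := hIic
        _ = ρ (Iio c) + ρ {c} := hsplit
        _ ≤ ENNReal.ofReal z + ρ {c} := add_le_add_left hIio _
    have h2 : (2⁻¹ : ℝ≥0∞) ≤ ρ {c} :=
      (ENNReal.add_le_add_iff_left (by simp [ENNReal.ofReal_ne_top])).mp this
    exact lt_of_lt_of_le (by norm_num) h2

lemma diag_countable (h : ∀ r : ℝ, ρ {r} ≤ 1/2) :
    Set.Countable {z ∈ Ioo (0:ℝ) 2⁻¹ | qtl ρ z = qtl ρ (z + 2⁻¹)} := by
  set B := {z ∈ Ioo (0:ℝ) 2⁻¹ | qtl ρ z = qtl ρ (z + 2⁻¹)} with hB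
  have hmaps : MapsTo (qtl ρ) B {c : ℝ | 0 < ρ {c}} := by
    rintro z ⟨hz, heq⟩
    exact (qtl_props_of_mem h hz heq).2
  have hinj : InjOn (qtl ρ) B := by
    rintro z ⟨hz, heq⟩ z' ⟨hz', heq'⟩ hqq
    have h1 := (qtl_props_of_mem h hz heq).1
    have h2 := (qtl_props_of_mem h hz' heq').1
    rw [hqq] at h1
    rw [h1] at h2
    exact ((ENNReal.ofReal_eq_ofReal_iff hz'.1.le hz.1.le).mp h2.symm).symm
  refine hmaps.countable_of_injOn hinj ?_
  have := Measure.countable_meas_level_set_pos (μ := ρ) (g := (id : ℝ → ℝ)) measurable_id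
  simpa [Set.setOf_eq_eq_singleton] using this

section Joint

variable {X : Type*} [MeasurableSpace X]

/-- jointly measurable quantile map with junk value outside `(0,1)` -/
noncomputable def Pf (κ : X → Measure ℝ) (p : X × ℝ) : ℝ :=
  if p.2 ∈ Ioo (0:ℝ) 1 then qtl (κ p.1) p.2 else 0

lemma measurable_Pf {κ : X → Measure ℝ} (hprob : ∀ x, IsProbabilityMeasure (κ x))
    (hκ : ∀ s : Set ℝ, MeasurableSet s → Measurable fun x => κ x s) :
    Measurable (Pf κ) := by
  apply measurable_of_Iic
  intro t
  have hc : Measurable fun x => cdf (κ x) t := by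
    have hrw : ∀ x, cdf (κ x) t = (κ x (Iic t)).toReal := fun x => by
      haveI := hprob x
      exact cdf_eq_real _ _
    simp only [hrw]
    exact (hκ _ measurableSet_Iic).ennreal_toReal
  have hs1 : MeasurableSet {p : X × ℝ | p.2 ∈ Ioo (0:ℝ) 1 ∧ p.2 ≤ cdf (κ p.1) t} :=
    (measurable_snd measurableSet_Ioo).inter
      (measurableSet_le measurable_snd (hc.comp measurable_fst))
  have hs2 : MeasurableSet {p : X × ℝ | p.2 ∉ Ioo (0:ℝ) 1} :=
    (measurable_snd measurableSet_Ioo).compl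
  rcases le_or_gt 0 t with h0 | h0
  · have heq : Pf κ ⁻¹' Iic t =
        {p : X × ℝ | p.2 ∈ Ioo (0:ℝ) 1 ∧ p.2 ≤ cdf (κ p.1) t} ∪
        {p : X × ℝ | p.2 ∉ Ioo (0:ℝ) 1} := by
      ext ⟨x, z⟩
      haveI := hprob x
      by_cases hz : z ∈ Ioo (0:ℝ) 1
      · simp only [mem_preimage, mem_Iic, Pf, hz, if_pos, mem_union, mem_setOf_eq, hz,
          true_and, not_true, or_false]
        exact qtl_le_iff hz.1 hz.2
      · simp only [mem_preimage, mem_Iic, Pf, if_neg hz, mem_union, mem_setOf_eq]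
        constructor
        · intro _; exact Or.inr hz
        · intro _; exact h0
    rw [heq]
    exact hs1.union hs2
  · have heq : Pf κ ⁻¹' Iic t =
        {p : X × ℝ | p.2 ∈ Ioo (0:ℝ) 1 ∧ p.2 ≤ cdf (κ p.1) t} := by
      ext ⟨x, z⟩
      haveI := hprob x
      by_cases hz : z ∈ Ioo (0:ℝ) 1
      · simp only [mem_preimage, mem_Iic, Pf, hz, if_pos, mem_setOf_eq, true_and]
        exact qtl_le_iff hz.1 hz.2
      · simp only [mem_preimage, mem_Iic, Pf, if_neg hz, mem_setOf_eq]
        constructor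
        · intro h'; linarith
        · rintro ⟨h1, _⟩; exact absurd h1 hz
    rw [heq]
    exact hs1

lemma vol_Ioo_inter_Iic {c : ℝ} (h0 : 0 ≤ c) (h1 : c ≤ 1) :
    volume (Ioo (0:ℝ) 1 ∩ Iic c) = ENNReal.ofReal c := by
  rcases lt_or_ge c 1 with hc | hc
  · have : Ioo (0:ℝ) 1 ∩ Iic c = Ioc 0 c := by
      ext z
      simp only [mem_inter_iff, mem_Ioo, mem_Iic, mem_Ioc]
      constructor
      · rintro ⟨⟨h1', _⟩, h3⟩; exact ⟨h1', h3⟩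
      · rintro ⟨h1', h2⟩; exact ⟨⟨h1', by linarith⟩, h2⟩
    rw [this, Real.volume_Ioc, sub_zero]
  · have hc1 : c = 1 := le_antisymm h1 hc
    subst hc1
    have h2 : Ioo (0:ℝ) 1 ∩ Iic 1 = Ioo 0 1 := by
      apply inter_eq_left.mpr
      intro z hz
      exact le_of_lt hz.2
    rw [h2, Real.volume_Ioo, sub_zero]

lemma map_Pf {κ : X → Measure ℝ} (hprob : ∀ x, IsProbabilityMeasure (κ x))
    (hκ : ∀ s : Set ℝ, MeasurableSet s → Measurable fun x => κ x s) (x : X) :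
    (volume.restrict (Ioo (0:ℝ) 1)).map (fun z => Pf κ (x, z)) = κ x := by
  haveI := hprob x
  have hmeas : Measurable fun z => Pf κ (x, z) :=
    (measurable_Pf hprob hκ).comp measurable_prodMk_left
  haveI : IsProbabilityMeasure (volume.restrict (Ioo (0:ℝ) 1)) :=
    ⟨by simp [Real.volume_Ioo]⟩
  haveI : IsProbabilityMeasure ((volume.restrict (Ioo (0:ℝ) 1)).map (fun z => Pf κ (x, z))) :=
    Measure.isProbabilityMeasure_map hmeas.aemeasurable
  refine Measure.ext_of_Iic _ _ (fun t => ?_)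
  rw [Measure.map_apply hmeas measurableSet_Iic,
    Measure.restrict_apply (hmeas measurableSet_Iic)]
  have hset : (fun z => Pf κ (x, z)) ⁻¹' Iic t ∩ Ioo (0:ℝ) 1
      = Ioo (0:ℝ) 1 ∩ Iic (cdf (κ x) t) := by
    ext z
    simp only [mem_inter_iff, mem_preimage, mem_Iic]
    constructor
    · rintro ⟨h1, h2⟩
      refine ⟨h2, ?_⟩
      rw [Pf, if_pos h2] at h1
      exact (qtl_le_iff h2.1 h2.2).mp h1
    · rintro ⟨h1, h2⟩
      refine ⟨?_, h1⟩
      rw [Pf, if_pos h1]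
      exact (qtl_le_iff h1.1 h1.2).mpr h2
  rw [hset, vol_Ioo_inter_Iic (cdf_nonneg (κ x) t) (cdf_le_one (κ x) t), ofReal_cdf]

end Joint

/-- the interval-exchange `z ↦ z + 1/2 mod 1` on `(0,1)` -/
noncomputable def shiftHalf (z : ℝ) : ℝ := if z < 2⁻¹ then z + 2⁻¹ else z - 2⁻¹

lemma measurable_shiftHalf : Measurable shiftHalf :=
  Measurable.ite (measurableSet_lt measurable_id measurable_const)
    (measurable_id.add_const _) (measurable_id.sub_const _)

lemma shiftHalf_mem {z : ℝ} (hz : z ∈ Ioo (0:ℝ) 1) (hz' : z ≠ 2⁻¹) :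
    shiftHalf z ∈ Ioo (0:ℝ) 1 := by
  rcases lt_or_gt_of_ne hz' with h | h
  · rw [shiftHalf, if_pos h]
    constructor <;> [linarith [hz.1]; linarith]
  · rw [shiftHalf, if_neg (by linarith)]
    constructor <;> [linarith; linarith [hz.2]]

lemma map_add_restrict (c : ℝ) {s : Set ℝ} (hs : MeasurableSet s) :
    (volume.restrict ((fun z : ℝ => z + c) ⁻¹' s)).map (fun z : ℝ => z + c)
      = volume.restrict s := by
  rw [← Measure.restrict_map ((by fun_prop : Measurable fun z : ℝ => z + c)) hs, map_add_right_eq_self volume c]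

lemma map_shiftHalf :
    (volume.restrict (Ioo (0:ℝ) 1)).map shiftHalf = volume.restrict (Ioo (0:ℝ) 1) := by
  have hsplit : Ioo (0:ℝ) 1 = Ioo 0 2⁻¹ ∪ Ico 2⁻¹ 1 :=
    (Ioo_union_Ico_eq_Ioo (by norm_num) (by norm_num)).symm
  have hd : Disjoint (Ioo (0:ℝ) 2⁻¹) (Ico 2⁻¹ 1) := by
    apply Set.disjoint_left.mpr
    rintro z ⟨_, h2⟩ ⟨h3, _⟩
    linarith
  have h1 : (volume.restrict (Ioo (0:ℝ) 2⁻¹)).map shiftHalf = volume.restrict (Ioo (2⁻¹:ℝ) 1) := by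
    have he : shiftHalf =ᵐ[volume.restrict (Ioo (0:ℝ) 2⁻¹)] (fun z => z + 2⁻¹) := by
      refine (ae_restrict_iff' measurableSet_Ioo).mpr (ae_of_all _ fun z hz => ?_)
      rw [shiftHalf, if_pos hz.2]
    have hpre : (fun z : ℝ => z + 2⁻¹) ⁻¹' Ioo (2⁻¹:ℝ) 1 = Ioo (0:ℝ) 2⁻¹ := by
      ext z
      simp only [mem_preimage, mem_Ioo]
      constructor <;> rintro ⟨a, b⟩ <;> constructor <;> linarith
    rw [Measure.map_congr he, ← hpre, map_add_restrict _ measurableSet_Ioo]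
  have h2 : (volume.restrict (Ico (2⁻¹:ℝ) 1)).map shiftHalf = volume.restrict (Ico (0:ℝ) 2⁻¹) := by
    have he : shiftHalf =ᵐ[volume.restrict (Ico (2⁻¹:ℝ) 1)] (fun z => z + -2⁻¹) := by
      refine (ae_restrict_iff' measurableSet_Ico).mpr (ae_of_all _ fun z hz => ?_)
      rw [shiftHalf, if_neg (by simpa using hz.1), sub_eq_add_neg]
    have hpre : (fun z : ℝ => z + -2⁻¹) ⁻¹' Ico (0:ℝ) 2⁻¹ = Ico (2⁻¹:ℝ) 1 := by
      ext z
      simp only [mem_preimage, mem_Ico]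
      constructor <;> rintro ⟨a, b⟩ <;> constructor <;> linarith
    rw [Measure.map_congr he, ← hpre, map_add_restrict _ measurableSet_Ico]
  have hae : (Ioo (2⁻¹:ℝ) 1 ∪ Ico 0 2⁻¹ : Set ℝ) =ᵐ[volume] Ioo (0:ℝ) 1 := by
    rw [ae_eq_set]
    constructor
    · refine measure_mono_null (fun z hz => ?_) (measure_singleton (0:ℝ))
      rcases hz.1 with h | h
      · exact absurd ⟨by linarith [h.1], h.2⟩ hz.2
      · have := hz.2
        simp only [mem_Ioo, not_and, not_lt] at this
        have h0 : z ≤ 0 := by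
          by_contra hc
          push_neg at hc
          linarith [this hc, h.2]
        have : z = 0 := le_antisymm h0 h.1
        simp [this]
    · refine measure_mono_null (fun z hz => ?_) (measure_singleton (2⁻¹:ℝ))
      have hz1 := hz.1
      have hz2 := hz.2
      simp only [mem_union, mem_Ioo, mem_Ico, not_or, not_and, not_lt] at hz2
      have h1 := hz2.1
      have h2 := hz2.2
      show z = 2⁻¹
      rcases lt_trichotomy z (2⁻¹:ℝ) with h | h | h
      · linarith [h2 hz1.1.le, h]
      · exact h
      · linarith [h1 h, hz1.2]
  calc (volume.restrict (Ioo (0:ℝ) 1)).map shiftHalf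
      = ((volume.restrict (Ioo (0:ℝ) 2⁻¹)) + (volume.restrict (Ico (2⁻¹:ℝ) 1))).map shiftHalf := by
        rw [hsplit, Measure.restrict_union hd measurableSet_Ico]
    _ = volume.restrict (Ioo (2⁻¹:ℝ) 1) + volume.restrict (Ico (0:ℝ) 2⁻¹) := by
        rw [Measure.map_add _ _ measurable_shiftHalf, h1, h2]
    _ = volume.restrict (Ioo (2⁻¹:ℝ) 1 ∪ Ico 0 2⁻¹) := by
        rw [Measure.restrict_union (by
          apply Set.disjoint_left.mpr
          rintro z ⟨h1', _⟩ ⟨_, h2'⟩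
          linarith) measurableSet_Ico]
    _ = volume.restrict (Ioo (0:ℝ) 1) := Measure.restrict_congr_set hae

end CouplingOffDiag

open CouplingOffDiag

/-- Measurable selection of couplings avoiding the diagonal.  Let `X`, `Y` be
Polish (standard Borel) spaces with `Y` uncountable, `x ↦ μ x` a measurable map
to probability measures on `Y`, and `ν` a probability measure on `X` such that
for `ν`-a.e. `x`, `μ x` has no atom of mass greater than `1/2`.  Then there is a
measurable map `x ↦ γ x` to probability measures on `Y × Y` such that `ν`-a.e.,
both marginals of `γ x` equal `μ x` and `γ x` gives zero mass to the diagonal. -/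
theorem measurable_coupling_off_diagonal
    {X Y : Type*} [MeasurableSpace X] [StandardBorelSpace X]
    [MeasurableSpace Y] [StandardBorelSpace Y] [Uncountable Y]
    (μ : X → Measure Y) (hμprob : ∀ x, IsProbabilityMeasure (μ x))
    (hμmeas : Measurable μ)
    (ν : Measure X) [IsProbabilityMeasure ν]
    (hatom : ∀ᵐ x ∂ν, ∀ y : Y, μ x {y} ≤ 1/2) :
    ∃ γ : X → Measure (Y × Y), Measurable γ ∧ (∀ x, IsProbabilityMeasure (γ x)) ∧
      ∀ᵐ x ∂ν, (γ x).map Prod.fst = μ x ∧ (γ x).map Prod.snd = μ x ∧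
        γ x {p : Y × Y | p.1 = p.2} = 0 := by
  classical
  let e : Y ≃ᵐ ℝ := PolishSpace.measurableEquivOfNotCountable not_countable not_countable
  set κ : X → Measure ℝ := fun x => (μ x).map e with hκdef
  have hκprob : ∀ x, IsProbabilityMeasure (κ x) := fun x => by
    haveI := hμprob x
    exact Measure.isProbabilityMeasure_map e.measurable.aemeasurable
  have hκmeas : ∀ s : Set ℝ, MeasurableSet s → Measurable fun x => κ x s := by
    intro s hs
    have hrw : ∀ x, κ x s = μ x (e ⁻¹' s) := fun x => Measure.map_apply e.measurable hs
    simp only [hrw]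
    exact (Measure.measurable_coe (e.measurable hs)).comp hμmeas
  set G : X × ℝ → Y × Y := fun p =>
    (e.symm (Pf κ p), e.symm (Pf κ (p.1, shiftHalf p.2))) with hGdef
  have hPmeas : Measurable (Pf κ) := measurable_Pf hκprob hκmeas
  have hGmeas : Measurable G :=
    (e.symm.measurable.comp hPmeas).prodMk
      (e.symm.measurable.comp (hPmeas.comp
        (measurable_fst.prodMk (measurable_shiftHalf.comp measurable_snd))))
  set I : Set ℝ := Ioo 0 1 with hIdef
  haveI : IsProbabilityMeasure (volume.restrict I) := ⟨by simp [hIdef, Real.volume_Ioo]⟩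
  refine ⟨fun x => (volume.restrict I).map (fun z => G (x, z)), ?_, ?_, ?_⟩
  · apply Measure.measurable_of_measurable_coe
    intro s hs
    have hrw : ∀ x, ((volume.restrict I).map (fun z => G (x, z))) s
        = (volume.restrict I) (Prod.mk x ⁻¹' (G ⁻¹' s)) := fun x => by
      have hGx : Measurable fun z : ℝ => G (x, z) := hGmeas.comp measurable_prodMk_left
      rw [Measure.map_apply hGx hs]; rfl
    simp only [hrw]
    exact measurable_measure_prodMk_left (hGmeas hs)
  · intro x
    exact Measure.isProbabilityMeasure_map (hGmeas.comp measurable_prodMk_left).aemeasurable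
  · filter_upwards [hatom] with x hx
    haveI := hμprob x
    haveI := hκprob x
    have hmapPf : (volume.restrict I).map (fun z => Pf κ (x, z)) = κ x :=
      map_Pf hκprob hκmeas x
    have hPmx : Measurable fun z => Pf κ (x, z) := hPmeas.comp measurable_prodMk_left
    have hGx : Measurable fun z : ℝ => G (x, z) := hGmeas.comp measurable_prodMk_left
    have hesymm : (κ x).map e.symm = μ x := by
      simp only [hκdef]
      exact MeasurableEquiv.map_symm_map e
    refine ⟨?_, ?_, ?_⟩
    · rw [Measure.map_map measurable_fst hGx]
      have hcomp : (Prod.fst ∘ fun z => G (x, z))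
          = (⇑e.symm) ∘ (fun z => Pf κ (x, z)) := rfl
      rw [hcomp, ← Measure.map_map e.symm.measurable hPmx, hmapPf, hesymm]
    · rw [Measure.map_map measurable_snd hGx]
      have hq : Measurable fun z : ℝ => e.symm (Pf κ (x, z)) := e.symm.measurable.comp hPmx
      have hcomp : (Prod.snd ∘ fun z => G (x, z))
          = ((fun z => e.symm (Pf κ (x, z))) ∘ shiftHalf) := rfl
      rw [hcomp, ← Measure.map_map hq measurable_shiftHalf, map_shiftHalf]
      rw [show (fun z => e.symm (Pf κ (x, z))) = (⇑e.symm) ∘ (fun z => Pf κ (x, z))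
        from rfl, ← Measure.map_map e.symm.measurable hPmx, hmapPf, hesymm]
    · have hdiag_meas : MeasurableSet {p : Y × Y | p.1 = p.2} := by
        have hrw : {p : Y × Y | p.1 = p.2}
            = (fun p : Y × Y => (e p.1, e p.2)) ⁻¹' {q : ℝ × ℝ | q.1 = q.2} := by
          ext p
          simp only [mem_setOf_eq, mem_preimage]
          exact ⟨fun h => by rw [h], fun h => e.injective h⟩
        rw [hrw]
        exact ((e.measurable.comp measurable_fst).prodMk (e.measurable.comp measurable_snd))
          (measurableSet_eq_fun measurable_fst measurable_snd)
      rw [Measure.map_apply hGx hdiag_meas, Measure.restrict_apply (hGx hdiag_meas)]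
      have hatomκ : ∀ r : ℝ, κ x {r} ≤ 1/2 := by
        intro r
        have hpre : e ⁻¹' {r} = {e.symm r} := by
          ext y
          simp only [mem_preimage, mem_singleton_iff]
          constructor
          · intro h; rw [← h, MeasurableEquiv.symm_apply_apply]
          · intro h; rw [h, MeasurableEquiv.apply_symm_apply]
        have : κ x {r} = μ x {e.symm r} := by
          simp only [hκdef]
          rw [Measure.map_apply e.measurable (measurableSet_singleton r), hpre]
        rw [this]
        exact hx _
      set B := {z ∈ Ioo (0:ℝ) 2⁻¹ | qtl (κ x) z = qtl (κ x) (z + 2⁻¹)} with hBdef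
      have hBc : Set.Countable B := diag_countable hatomκ
      have hsub : (fun z => G (x, z)) ⁻¹' {p : Y × Y | p.1 = p.2} ∩ I
          ⊆ (({2⁻¹} : Set ℝ) ∪ B) ∪ (fun z => z + 2⁻¹) '' B := by
        rintro z ⟨hzd, hzI⟩
        by_cases hhalf : z = 2⁻¹
        · exact Or.inl (Or.inl hhalf)
        have hzd' : Pf κ (x, z) = Pf κ (x, shiftHalf z) := e.symm.injective hzd
        have hsI : shiftHalf z ∈ Ioo (0:ℝ) 1 := shiftHalf_mem hzI hhalf
        rw [show Pf κ (x, z) = qtl (κ x) z from by rw [Pf, if_pos (show z ∈ Ioo (0:ℝ) 1 from hzI)],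
          show Pf κ (x, shiftHalf z) = qtl (κ x) (shiftHalf z) from by rw [Pf, if_pos hsI]] at hzd'
        rcases lt_or_gt_of_ne hhalf with h | h
        · refine Or.inl (Or.inr ?_)
          refine ⟨⟨hzI.1, h⟩, ?_⟩
          rw [← show shiftHalf z = z + 2⁻¹ from by rw [shiftHalf, if_pos h]]
          exact hzd'
        · refine Or.inr ⟨z - 2⁻¹, ⟨⟨by linarith, by linarith [hzI.2]⟩, ?_⟩, by ring⟩
          have hs : shiftHalf z = z - 2⁻¹ := by rw [shiftHalf, if_neg (by linarith)]
          rw [show z - 2⁻¹ + 2⁻¹ = z from by ring, ← hs]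
          exact hzd'.symm
      refine measure_mono_null hsub ?_
      exact Set.Countable.measure_zero
        (((countable_singleton _).union hBc).union (hBc.image _)) _
end
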